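/- Let L be the weighted Laplacian matrix of a finite connected graph X with vertex weights c(v) and edge weights c(e) (each c(e) dividing the weights of its endpoints). Then the adjugate of L equals adj(L) = C_V^{-1} J ξ, where J is the all-ones matrix, C_V is the diagonal matrix of vertex weights, and ξ = (∏_{v∈V(X)} c(v)) · Σ_{T spanning tree of X} ∏_{e∈E(T)} c(e)^{-1}. -/

import Mathlib

open scoped Classical

open Finset

/-- Connectivity of a multigraph presented by endpoint maps `s t : E → V`. -/
def GraphConnected {V E : Type*} (s t : E → V) : Prop :=
  ∀ u v : V, Relation.ReflTransGen
    (fun a b => ∃ e, (s e = a ∧ t e = b) ∨ (s e = b ∧ t e = a)) u v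

/-- Weighted (graph of groups) Laplacian matrix: the `(u,v)` entry is the coefficient
of `u` in `L(v)`, where firing `v` sends `c(v)/c(e)` chips along each edge `e` at `v`.
Loops contribute zero automatically. -/
def gogLap {V E : Type*} [Fintype E] [DecidableEq V]
    (s t : E → V) (cV : V → ℕ) (cE : E → ℕ) : Matrix V V ℤ :=
  Matrix.of fun u v => ∑ e : E, ((cV v / cE e : ℕ) : ℤ) *
    (((if s e = v then (1 : ℤ) else 0) - (if t e = v then 1 else 0)) *
     ((if s e = u then (1 : ℤ) else 0) - (if t e = u then 1 else 0)))

/-- Degree (sum of coefficients) of a divisor, as a linear map. -/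
def degHom (V : Type*) [Fintype V] : (V → ℤ) →ₗ[ℤ] ℤ where
  toFun d := ∑ v, d v
  map_add' x y := Finset.sum_add_distrib
  map_smul' c x := by simp [Finset.mul_sum]

/-- The Jacobian of the weighted graph: degree-zero divisors modulo the image of the
weighted Laplacian. -/
abbrev gogJac {V E : Type*} [Fintype V] [Fintype E] [DecidableEq V]
    (s t : E → V) (cV : V → ℕ) (cE : E → ℕ) :=
  LinearMap.ker (degHom V) ⧸
    Submodule.comap (LinearMap.ker (degHom V)).subtype
      (LinearMap.range (gogLap s t cV cE).mulVecLin)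

/-- A spanning tree of the multigraph, given as a set of edges: it connects all
vertices and has `|V| - 1` edges. -/
def IsSpanningTree {V E : Type*} [Fintype V] (s t : E → V) (F : Finset E) : Prop :=
  (∀ u v : V, Relation.ReflTransGen
      (fun a b => ∃ e ∈ F, (s e = a ∧ t e = b) ∨ (s e = b ∧ t e = a)) u v) ∧
  F.card + 1 = Fintype.card V

namespace Stmt2Aux

set_option linter.unusedSectionVars false

open Matrix

variable {V E : Type*} [Fintype V] [Fintype E] [DecidableEq V] [DecidableEq E]

/-- incidence matrix -/
def inc (s t : E → V) : Matrix V E ℚ :=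
  Matrix.of fun u e => (if s e = u then (1 : ℚ) else 0) - (if t e = u then 1 else 0)

/-- symmetric weighted laplacian -/
def lap0 (s t : E → V) (w : E → ℚ) : Matrix V V ℚ :=
  Matrix.of fun u v => ∑ e : E, w e * (inc s t u e * inc s t v e)

lemma lap0_symm (s t : E → V) (w : E → ℚ) : (lap0 s t w)ᵀ = lap0 s t w := by
  ext u v
  simp only [lap0, Matrix.transpose_apply, Matrix.of_apply]
  exact Finset.sum_congr rfl fun e _ => by ring

lemma sum_inc_mul (s t : E → V) (e : E) (x : V → ℚ) :
    ∑ u : V, inc s t u e * x u = x (s e) - x (t e) := by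
  simp only [inc, Matrix.of_apply, sub_mul, ite_mul, one_mul, zero_mul]
  rw [Finset.sum_sub_distrib]
  simp [Finset.sum_ite_eq]


lemma inc_cast (s t : E → V) (u : V) (e : E) :
    (((if s e = u then (1 : ℤ) else 0) - (if t e = u then 1 else 0) : ℤ) : ℚ)
      = inc s t u e := by
  simp only [inc, Matrix.of_apply]
  split_ifs <;> norm_num

/-- determinant of an updateRow with a single vector equals the determinant of the
complementary submatrix -/
lemma det_updateRow_single {R : Type*} [CommRing R] (A : Matrix V V R) (v0 : V) :
    (A.updateRow v0 (Pi.single v0 1)).det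
      = (A.submatrix (Subtype.val : {v : V // v ≠ v0} → V) Subtype.val).det := by
  classical
  let eqv : {v : V // v ≠ v0} ⊕ {v : V // ¬ v ≠ v0} ≃ V := Equiv.sumCompl _
  haveI : Unique {v : V // ¬ v ≠ v0} :=
    ⟨⟨⟨v0, by simp⟩⟩, fun j => Subtype.ext (not_not.mp j.2)⟩
  rw [← Matrix.det_submatrix_equiv_self eqv]
  have hblock : (A.updateRow v0 (Pi.single v0 1)).submatrix eqv eqv =
      Matrix.fromBlocks (A.submatrix Subtype.val Subtype.val)
        (Matrix.of fun i (_ : {v : V // ¬ v ≠ v0}) => A ↑i v0) 0 1 := by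
    ext i j
    cases i with
    | inl i =>
      cases j with
      | inl j =>
        simp [eqv, Matrix.updateRow_ne i.2]
      | inr j =>
        have hj : (j : V) = v0 := not_not.mp j.2
        simp [eqv, Matrix.updateRow_ne i.2, hj]
    | inr i =>
      have hi : (i : V) = v0 := not_not.mp i.2
      cases j with
      | inl j =>
        simp [eqv, hi, Matrix.updateRow_self, Pi.single_eq_of_ne j.2]
      | inr j =>
        have hj : (j : V) = v0 := not_not.mp j.2
        have hij : i = j := Subsingleton.elim _ _
        simp [eqv, hi, hj, Matrix.updateRow_self, hij, Matrix.one_apply_eq]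
  rw [hblock, Matrix.det_fromBlocks_zero₂₁, Matrix.det_one, mul_one]

lemma lap0_mulVec_apply (s t : E → V) (w : E → ℚ) (x : V → ℚ) (u : V) :
    (lap0 s t w).mulVec x u = ∑ e : E, w e * inc s t u e * (x (s e) - x (t e)) := by
  simp only [Matrix.mulVec, dotProduct, lap0, Matrix.of_apply]
  simp_rw [Finset.sum_mul]
  rw [Finset.sum_comm]
  refine Finset.sum_congr rfl fun e _ => ?_
  calc ∑ v : V, w e * (inc s t u e * inc s t v e) * x v
      = (w e * inc s t u e) * ∑ v : V, inc s t v e * x v := by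
        rw [Finset.mul_sum]; exact Finset.sum_congr rfl fun v _ => by ring
    _ = w e * inc s t u e * (x (s e) - x (t e)) := by rw [sum_inc_mul]

/-- kernel of lap0 is constants (given connectivity, positive weights) -/
lemma lap0_ker (s t : E → V) (w : E → ℚ) (hw : ∀ e, 0 < w e)
    (hconn : GraphConnected s t) {x : V → ℚ}
    (hx : (lap0 s t w).mulVec x = 0) : ∀ u v : V, x u = x v := by
  classical
  have expand := lap0_mulVec_apply s t w x
  have hq : ∑ e : E, w e * (x (s e) - x (t e)) ^ 2 = 0 := by
    have key : ∑ u : V, x u * ((lap0 s t w).mulVec x u)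
        = ∑ e : E, w e * (x (s e) - x (t e)) ^ 2 := by
      simp_rw [expand, Finset.mul_sum]
      rw [Finset.sum_comm]
      refine Finset.sum_congr rfl fun e _ => ?_
      calc ∑ u : V, x u * (w e * inc s t u e * (x (s e) - x (t e)))
          = (w e * (x (s e) - x (t e))) * ∑ u : V, inc s t u e * x u := by
            rw [Finset.mul_sum]; exact Finset.sum_congr rfl fun u _ => by ring
        _ = w e * (x (s e) - x (t e)) ^ 2 := by rw [sum_inc_mul]; ring
    rw [← key, hx]
    simp
  have hterm : ∀ e, x (s e) = x (t e) := by
    intro e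
    have hnn : ∀ e ∈ Finset.univ, (0 : ℚ) ≤ w e * (x (s e) - x (t e)) ^ 2 :=
      fun e _ => mul_nonneg (hw e).le (sq_nonneg _)
    have h1 := (Finset.sum_eq_zero_iff_of_nonneg hnn).mp hq e (Finset.mem_univ e)
    have h2 : (x (s e) - x (t e)) ^ 2 = 0 := by
      rcases mul_eq_zero.mp h1 with h | h
      · exact absurd h (hw e).ne'
      · exact h
    have h3 := sq_eq_zero_iff.mp h2
    linarith
  intro u v
  induction hconn u v with
  | refl => rfl
  | tail h1 h2 ih =>
    obtain ⟨e, h | h⟩ := h2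
    · rw [ih, ← h.1, ← h.2]; exact hterm e
    · rw [ih, ← h.1, ← h.2]; exact (hterm e).symm

/-- there is an `F`-path of length `n` from `v` to `v0` -/
def reachN (s t : E → V) (F : Finset E) (v0 : V) : ℕ → V → Prop
  | 0, v => v = v0
  | n + 1, v => ∃ u, (∃ e ∈ F, (s e = v ∧ t e = u) ∨ (s e = u ∧ t e = v))
      ∧ reachN s t F v0 n u

/-- spanning-tree case: the reduced incidence determinant squares to 1 -/
lemma tree_det_sq (s t : E → V) (v0 : V) (F : Finset E)
    (hconnF : ∀ u v : V, Relation.ReflTransGen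
      (fun a b => ∃ e ∈ F, (s e = a ∧ t e = b) ∨ (s e = b ∧ t e = a)) u v)
    (hcard : F.card + 1 = Fintype.card V)
    (g : {v : V // v ≠ v0} ≃ {e : E // e ∈ F}) :
    (Matrix.of fun i j : {v : V // v ≠ v0} => inc s t ↑i ↑(g j)).det ^ 2 = 1 := by
  classical
  -- distance to the root
  have hex : ∀ v : V, ∃ n, reachN s t F v0 n v := by
    intro v
    induction hconnF v v0 using Relation.ReflTransGen.head_induction_on with
    | refl => exact ⟨0, rfl⟩
    | head hac _ ih =>
      obtain ⟨n, hn⟩ := ih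
      exact ⟨n + 1, _, hac, hn⟩
  set d : V → ℕ := fun v => Nat.find (hex v) with hd
  -- parent edge of every non-root vertex
  have hpar : ∀ i : {v : V // v ≠ v0}, ∃ (e : E) (u : V), e ∈ F ∧
      ((s e = ↑i ∧ t e = u) ∨ (s e = u ∧ t e = ↑i)) ∧ d u < d ↑i := by
    intro i
    have hspec : reachN s t F v0 (d ↑i) ↑i := Nat.find_spec (hex ↑i)
    have hdpos : d ↑i ≠ 0 := by
      intro h
      rw [h] at hspec
      exact i.2 hspec
    obtain ⟨n, hn⟩ : ∃ n, d (↑i : V) = n + 1 := ⟨d ↑i - 1, by omega⟩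
    rw [hn] at hspec
    obtain ⟨u, ⟨e, he, hor⟩, hru⟩ := hspec
    have hdu : d u ≤ n := Nat.find_min' (hex u) hru
    exact ⟨e, u, he, hor, by omega⟩
  choose ed pu hmem hor hlt using hpar
  -- the parent-edge map is a bijection
  have hne_pu : ∀ i, (pu i : V) ≠ ↑i := fun i h => by
    have := hlt i
    rw [h] at this
    omega
  have hinj : Function.Injective (fun i => (⟨ed i, hmem i⟩ : {e : E // e ∈ F})) := by
    intro i i' h
    have he : ed i = ed i' := congrArg Subtype.val h
    by_contra hne
    rcases hor i with ⟨h1, h2⟩ | ⟨h1, h2⟩ <;> rcases hor i' with ⟨h3, h4⟩ | ⟨h3, h4⟩ <;>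
      rw [← he] at h3 h4
    · exact hne (Subtype.ext (h1.symm.trans h3))
    · have e1 : (↑i : V) = pu i' := h1.symm.trans h3
      have e2 : (pu i : V) = ↑i' := h2.symm.trans h4
      have l1 := hlt i
      have l2 := hlt i'
      rw [e2] at l1
      rw [← e1] at l2
      omega
    · have e1 : (pu i : V) = ↑i' := h1.symm.trans h3
      have e2 : (↑i : V) = pu i' := h2.symm.trans h4
      have l1 := hlt i
      have l2 := hlt i'
      rw [e1] at l1
      rw [← e2] at l2
      omega
    · exact hne (Subtype.ext (h2.symm.trans h4))
  have hcardI : Fintype.card {v : V // v ≠ v0} = Fintype.card V - 1 := by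
    have h := Fintype.card_subtype_compl (fun v : V => v = v0)
    simpa [Fintype.card_subtype_eq] using h
  have hcards : Fintype.card {v : V // v ≠ v0} = Fintype.card {e : E // e ∈ F} := by
    rw [hcardI, Fintype.card_coe]
    omega
  have hbij := (Fintype.bijective_iff_injective_and_card _).mpr ⟨hinj, hcards⟩
  set Eed : {v : V // v ≠ v0} ≃ {e : E // e ∈ F} := Equiv.ofBijective _ hbij with hEed
  set σ : Equiv.Perm {v : V // v ≠ v0} := g.trans Eed.symm with hσ
  set P₀ : Matrix {v : V // v ≠ v0} {v : V // v ≠ v0} ℚ :=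
    Matrix.of fun i j => inc s t ↑i (ed j) with hP₀
  have hPP : (Matrix.of fun i j : {v : V // v ≠ v0} => inc s t ↑i ↑(g j))
      = P₀.submatrix id σ := by
    ext i j
    have hsj : ed (σ j) = ↑(g j) := by
      have h := Eed.apply_symm_apply (g j)
      have : σ j = Eed.symm (g j) := by simp [hσ]
      rw [this]
      exact congrArg Subtype.val h
    simp only [Matrix.submatrix_apply, id_eq, hP₀, Matrix.of_apply]
    rw [hsj]
  -- a linear order making P₀ triangular
  set m : ℕ := Fintype.card {v : V // v ≠ v0} with hm
  set key : {v : V // v ≠ v0} → ℕ :=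
    fun i => d ↑i * m + ((Fintype.equivFin {v : V // v ≠ v0}) i : ℕ) with hkey
  have hkeymono : ∀ i i' : {v : V // v ≠ v0}, d ↑i < d ↑i' → key i < key i' := by
    intro i i' hdi
    have h1 : ((Fintype.equivFin {v : V // v ≠ v0}) i : ℕ) < m :=
      ((Fintype.equivFin {v : V // v ≠ v0}) i).isLt
    have h2 : (d ↑i + 1) * m ≤ d ↑i' * m := Nat.mul_le_mul_right m hdi
    have h3 : (d ↑i + 1) * m = d ↑i * m + m := by ring
    simp only [hkey]
    omega
  have hkeyinj : Function.Injective key := by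
    intro i i' h
    have hdd : d (↑i : V) = d ↑i' := by
      rcases lt_trichotomy (d (↑i : V)) (d ↑i') with hl | heq | hl
      · exact absurd h (Nat.ne_of_lt (hkeymono _ _ hl))
      · exact heq
      · exact absurd h.symm (Nat.ne_of_lt (hkeymono _ _ hl))
    rw [hkey] at h
    simp only [hdd] at h
    have : ((Fintype.equivFin {v : V // v ≠ v0}) i : ℕ)
        = ((Fintype.equivFin {v : V // v ≠ v0}) i' : ℕ) := by omega
    exact (Fintype.equivFin {v : V // v ≠ v0}).injective (Fin.ext this)
  letI : LinearOrder {v : V // v ≠ v0} := LinearOrder.lift' key hkeyinj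
  have hltkey : ∀ {i j : {v : V // v ≠ v0}}, i < j ↔ key i < key j := Iff.rfl
  have htri : P₀.BlockTriangular id := by
    intro i j hji
    -- hji : j < i ; show P₀ i j = 0
    have hij : (↑i : V) ≠ ↑j := by
      intro h
      exact absurd (Subtype.ext h : i = j) (ne_of_gt hji)
    have hipu : (↑i : V) ≠ pu j := by
      intro h
      have : key i < key j := hkeymono _ _ (h ▸ hlt j)
      have := hltkey.mpr this
      exact absurd hji (lt_asymm this)
    rcases hor j with ⟨h1, h2⟩ | ⟨h1, h2⟩
    · simp [hP₀, inc, h1, h2, Ne.symm hij, Ne.symm hipu]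
    · simp [hP₀, inc, h1, h2, Ne.symm hij, Ne.symm hipu]
  have hdiag : ∀ j, P₀ j j = 1 ∨ P₀ j j = -1 := by
    intro j
    rcases hor j with ⟨h1, h2⟩ | ⟨h1, h2⟩
    · left
      simp [hP₀, inc, h1, h2, hne_pu j]
    · right
      simp [hP₀, inc, h1, h2, hne_pu j]
  have hdet₀ : P₀.det ^ 2 = 1 := by
    rw [Matrix.det_of_upperTriangular htri, ← Finset.prod_pow]
    refine Finset.prod_eq_one fun j _ => ?_
    rcases hdiag j with h | h <;> rw [h] <;> norm_num
  rw [hPP, Matrix.det_permute' σ P₀, mul_pow, hdet₀, mul_one]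
  rcases Int.units_eq_one_or (Equiv.Perm.sign σ) with h | h <;> rw [h] <;> norm_num

/-- non-spanning case: the reduced incidence determinant vanishes -/
lemma nontree_det (s t : E → V) (v0 : V) (F : Finset E)
    (hnc : ¬ ∀ u v : V, Relation.ReflTransGen
      (fun a b => ∃ e ∈ F, (s e = a ∧ t e = b) ∨ (s e = b ∧ t e = a)) u v)
    (g : {v : V // v ≠ v0} ≃ {e : E // e ∈ F}) :
    (Matrix.of fun i j : {v : V // v ≠ v0} => inc s t ↑i ↑(g j)).det = 0 := by
  classical
  push_neg at hnc
  obtain ⟨a, b, hab⟩ := hnc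
  set R : V → V → Prop :=
    fun x y => ∃ e ∈ F, (s e = x ∧ t e = y) ∨ (s e = y ∧ t e = x) with hR
  have hsymmR : Symmetric R := by
    rintro x y ⟨e, he, h⟩
    exact ⟨e, he, h.symm⟩
  have hsymT : ∀ {x y : V}, Relation.ReflTransGen R x y → Relation.ReflTransGen R y x :=
    fun h => (@Relation.ReflTransGen.stdSymm _ R ⟨hsymmR⟩).symm _ _ h
  have hx0 : ∃ x0 : V, ¬ Relation.ReflTransGen R x0 v0 := by
    by_cases ha : Relation.ReflTransGen R a v0
    · by_cases hb : Relation.ReflTransGen R b v0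
      · exact absurd (ha.trans (hsymT hb)) hab
      · exact ⟨b, hb⟩
    · exact ⟨a, ha⟩
  obtain ⟨x0, hx0⟩ := hx0
  set S : Set V := {u | Relation.ReflTransGen R u x0} with hS
  have hv0S : v0 ∉ S := fun h => hx0 (hsymT h)
  have hx0S : x0 ∈ S := Relation.ReflTransGen.refl
  have hx0ne : x0 ≠ v0 := fun h => hx0 (h ▸ Relation.ReflTransGen.refl)
  have hclosed : ∀ e ∈ F, (s e ∈ S ↔ t e ∈ S) := by
    intro e he
    constructor
    · exact fun h => Relation.ReflTransGen.head ⟨e, he, Or.inr ⟨rfl, rfl⟩⟩ h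
    · exact fun h => Relation.ReflTransGen.head ⟨e, he, Or.inl ⟨rfl, rfl⟩⟩ h
  set y : {v : V // v ≠ v0} → ℚ := fun i => if (i : V) ∈ S then 1 else 0 with hy'
  have hy : y ≠ 0 := by
    intro h
    have := congrFun h ⟨x0, hx0ne⟩
    simp [hy', hx0S] at this
  refine Matrix.exists_vecMul_eq_zero_iff.mp ⟨y, hy, ?_⟩
  funext j
  simp only [Matrix.vecMul, dotProduct, Matrix.of_apply, Pi.zero_apply]
  have heF : (g j : E) ∈ F := (g j).2
  set e : E := (g j : E)
  have hsub : ∀ f : V → ℚ, ∑ i : {v : V // v ≠ v0}, f ↑i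
      = ∑ u ∈ Finset.univ.erase v0, f u := by
    intro f
    exact (Finset.sum_subtype (p := fun v => v ≠ v0) (Finset.univ.erase v0)
      (by simp [Finset.mem_erase]) f).symm
  have h1 : ∀ c : V, ∑ u ∈ Finset.univ.erase v0,
      (if u ∈ S then (1:ℚ) else 0) * (if c = u then 1 else 0)
        = if c ≠ v0 ∧ c ∈ S then 1 else 0 := by
    intro c
    calc ∑ u ∈ Finset.univ.erase v0,
        (if u ∈ S then (1:ℚ) else 0) * (if c = u then 1 else 0)
        = ∑ u ∈ Finset.univ.erase v0,
          (if u = c then (if u ∈ S then (1:ℚ) else 0) else 0) :=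
          Finset.sum_congr rfl fun u _ => by
            by_cases h : c = u
            · simp [h]
            · rw [if_neg (fun h' : u = c => h h'.symm)]
              simp [h]
      _ = if c ∈ Finset.univ.erase v0 then (if c ∈ S then (1:ℚ) else 0) else 0 :=
          Finset.sum_ite_eq' _ c (fun u => if u ∈ S then (1:ℚ) else 0)
      _ = if c ≠ v0 ∧ c ∈ S then 1 else 0 := by
          simp only [Finset.mem_erase, Finset.mem_univ, and_true]
          split_ifs <;> tauto
  calc ∑ i : {v : V // v ≠ v0}, y i * inc s t ↑i e
      = ∑ u ∈ Finset.univ.erase v0, (if u ∈ S then (1:ℚ) else 0) * inc s t u e := by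
        rw [← hsub fun u => (if u ∈ S then (1:ℚ) else 0) * inc s t u e]
    _ = (if s e ≠ v0 ∧ s e ∈ S then (1:ℚ) else 0)
        - (if t e ≠ v0 ∧ t e ∈ S then 1 else 0) := by
        simp only [inc, Matrix.of_apply, mul_sub]
        rw [Finset.sum_sub_distrib, h1 (s e), h1 (t e)]
    _ = 0 := by
        have hc1 : (s e ≠ v0 ∧ s e ∈ S) = (s e ∈ S) :=
          propext ⟨And.right, fun h => ⟨fun hc => hv0S (hc ▸ h), h⟩⟩
        have hc2 : (t e ≠ v0 ∧ t e ∈ S) = (t e ∈ S) :=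
          propext ⟨And.right, fun h => ⟨fun hc => hv0S (hc ▸ h), h⟩⟩
        simp only [hc1, hc2]
        simp only [show (t e ∈ S) = (s e ∈ S) from propext (hclosed e heF).symm, sub_self]

/-- weighted matrix-tree: the cofactor equals the spanning tree sum -/
lemma det_submatrix_lap0 (s t : E → V) (w : E → ℚ) (v0 : V) :
    ((lap0 s t w).submatrix (Subtype.val : {v : V // v ≠ v0} → V) Subtype.val).det
      = ∑ F ∈ Finset.univ.filter (fun F : Finset E => IsSpanningTree s t F),
          ∏ e ∈ F, w e := by
  classical
  set B : {v : V // v ≠ v0} → E → ℚ := fun i e => inc s t ↑i e with hB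
  set T : ({v : V // v ≠ v0} → E) → ℚ := fun f =>
    (∏ i, B i (f i)) * ((∏ i, w (f i)) * (Matrix.of fun i j => B j (f i)).det) with hT
  have hcardI : Fintype.card {v : V // v ≠ v0} = Fintype.card V - 1 := by
    have h := Fintype.card_subtype_compl (fun v : V => v = v0)
    simpa [Fintype.card_subtype_eq] using h
  have hVpos : 1 ≤ Fintype.card V := Fintype.card_pos_iff.mpr ⟨v0⟩
  -- Step 1: multilinear expansion of the determinant
  have h1 : ((lap0 s t w).submatrix (Subtype.val : {v : V // v ≠ v0} → V) Subtype.val).det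
      = ∑ f : {v : V // v ≠ v0} → E, T f := by
    have hM : ((lap0 s t w).submatrix (Subtype.val : {v : V // v ≠ v0} → V) Subtype.val)
        = fun i => ∑ e : E, B i e • (fun j => w e * B j e) := by
      funext i j
      simp only [Matrix.submatrix_apply, lap0, Matrix.of_apply, Finset.sum_apply,
        Pi.smul_apply, smul_eq_mul, hB]
      exact Finset.sum_congr rfl fun e _ => by ring
    have e1 : ((lap0 s t w).submatrix (Subtype.val : {v : V // v ≠ v0} → V) Subtype.val).det
        = Matrix.detRowAlternating
            (fun i : {v : V // v ≠ v0} => ∑ e : E, B i e • (fun j => w e * B j e)) := by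
      rw [← hM]
      rfl
    rw [e1]
    have hms := MultilinearMap.map_sum
      (Matrix.detRowAlternating (R := ℚ) (n := {v : V // v ≠ v0})).toMultilinearMap
      (g := fun (i : {v : V // v ≠ v0}) (e : E) => B i e • (fun j => w e * B j e))
    simp only [AlternatingMap.coe_multilinearMap] at hms
    rw [hms]
    refine Finset.sum_congr rfl fun f _ => ?_
    have e2 : Matrix.detRowAlternating
        (fun i : {v : V // v ≠ v0} => B i (f i) • (fun j => w (f i) * B j (f i)))
        = (∏ i, B i (f i)) • Matrix.detRowAlternating
            (fun i : {v : V // v ≠ v0} => (fun j => w (f i) * B j (f i))) := by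
      exact MultilinearMap.map_smul_univ _ _ _
    have e3 : Matrix.detRowAlternating
        (fun i : {v : V // v ≠ v0} => (fun j => w (f i) * B j (f i)))
        = (∏ i, w (f i)) • Matrix.detRowAlternating
            (fun i : {v : V // v ≠ v0} => (fun j => B j (f i))) := by
      exact MultilinearMap.map_smul_univ _ _ _
    rw [e2, e3, hT]
    simp only [smul_eq_mul]
    rfl
  -- vanishing for non-injective assignments
  have h2 : ∀ f : {v : V // v ≠ v0} → E, ¬ Function.Injective f → T f = 0 := by
    intro f hf
    simp only [Function.Injective, not_forall] at hf
    obtain ⟨i, i', hii', hne⟩ := hf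
    have : (Matrix.of fun i j : {v : V // v ≠ v0} => B j (f i)).det = 0 := by
      refine Matrix.det_zero_of_row_eq hne ?_
      funext j
      simp [hii']
    rw [hT]
    simp [this]
  -- Step 2: group by the image
  have h3 : (∑ f : {v : V // v ≠ v0} → E, T f)
      = ∑ F ∈ (Finset.univ : Finset (Finset E)),
          ∑ f ∈ Finset.univ.filter
            (fun f : {v : V // v ≠ v0} → E => Finset.image f Finset.univ = F), T f :=
    (Finset.sum_fiberwise_of_maps_to (fun f _ => Finset.mem_univ _) T).symm
  -- inner sum for sets of the right cardinality
  have hinner : ∀ F : Finset E, F.card = Fintype.card {v : V // v ≠ v0} →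
      ∀ gF : {v : V // v ≠ v0} ≃ {e : E // e ∈ F},
      (∑ f ∈ Finset.univ.filter
          (fun f : {v : V // v ≠ v0} → E => Finset.image f Finset.univ = F), T f)
        = (∏ e ∈ F, w e)
          * (Matrix.of fun i j : {v : V // v ≠ v0} => inc s t ↑i ↑(gF j)).det ^ 2 := by
    intro F hFc gF
    set N₀ : Matrix {v : V // v ≠ v0} {v : V // v ≠ v0} ℚ :=
      Matrix.of fun x j => B j ↑(gF x) with hN₀
    set P : Matrix {v : V // v ≠ v0} {v : V // v ≠ v0} ℚ :=
      Matrix.of fun i j => B i ↑(gF j) with hP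
    have hN₀P : N₀.det = P.det := by
      have : N₀ = Pᵀ := by
        ext x j
        simp [hN₀, hP]
      rw [this, Matrix.det_transpose]
    have key : (∑ σ : Equiv.Perm {v : V // v ≠ v0}, T (fun x => ↑(gF (σ x))))
        = ∑ f ∈ Finset.univ.filter
          (fun f : {v : V // v ≠ v0} → E => Finset.image f Finset.univ = F), T f := by
      refine Finset.sum_bij (fun σ _ => fun x => (↑(gF (σ x)) : E)) ?_ ?_ ?_ ?_
      · intro σ _
        refine Finset.mem_filter.mpr ⟨Finset.mem_univ _, ?_⟩
        ext e
        simp only [Finset.mem_image, Finset.mem_univ, true_and]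
        constructor
        · rintro ⟨x, rfl⟩
          exact (gF (σ x)).2
        · intro he
          exact ⟨σ.symm (gF.symm ⟨e, he⟩), by simp⟩
      · intro σ₁ _ σ₂ _ hs
        ext x
        have hx := congrFun hs x
        have : gF (σ₁ x) = gF (σ₂ x) := Subtype.ext hx
        exact congrArg Subtype.val (gF.injective this)
      · intro f hf
        have hf' : Finset.image f Finset.univ = F := (Finset.mem_filter.mp hf).2
        have hinj : Function.Injective f := by
          have hc : (Finset.univ.image f).card
              = (Finset.univ : Finset {v : V // v ≠ v0}).card := by
            rw [hf', hFc]
            exact Finset.card_univ.symm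
          have hio := Finset.card_image_iff.mp hc
          intro a b hab
          exact hio (Finset.mem_coe.mpr (Finset.mem_univ a))
            (Finset.mem_coe.mpr (Finset.mem_univ b)) hab
        have hmem : ∀ x, f x ∈ F := by
          intro x
          rw [← hf']
          exact Finset.mem_image_of_mem f (Finset.mem_univ x)
        have hbij : Function.Bijective
            (fun x : {v : V // v ≠ v0} => (⟨f x, hmem x⟩ : {e : E // e ∈ F})) := by
          refine (Fintype.bijective_iff_injective_and_card _).mpr ⟨?_, ?_⟩
          · intro a b hab
            exact hinj (congrArg Subtype.val hab)
          · rw [Fintype.card_coe]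
            exact hFc.symm
        refine ⟨(Equiv.ofBijective _ hbij).trans gF.symm, Finset.mem_univ _, ?_⟩
        funext x
        simp [Equiv.ofBijective]
      · intro σ _
        rfl
    rw [← key]
    have hT' : ∀ σ : Equiv.Perm {v : V // v ≠ v0}, T (fun x => ↑(gF (σ x)))
        = (∏ e ∈ F, w e) * P.det
          * (((Equiv.Perm.sign σ : ℤ) : ℚ) * ∏ x, B x ↑(gF (σ x))) := by
      intro σ
      have hw' : (∏ x, w (↑(gF (σ x)) : E)) = ∏ e ∈ F, w e := by
        rw [← Finset.prod_coe_sort F w]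
        exact Equiv.prod_comp (σ.trans gF) (fun x : {e : E // e ∈ F} => w ↑x)
      have hNs : (Matrix.of fun x j : {v : V // v ≠ v0} => B j ↑(gF (σ x)))
          = N₀.submatrix σ id := by
        ext x j
        simp [hN₀]
      rw [hT]
      simp only
      rw [hNs, Matrix.det_permute σ N₀, hw', hN₀P]
      push_cast
      ring
    rw [Finset.sum_congr rfl fun σ _ => hT' σ, ← Finset.mul_sum]
    have hdet2 : (∑ σ : Equiv.Perm {v : V // v ≠ v0},
        ((Equiv.Perm.sign σ : ℤ) : ℚ) * ∏ x, B x ↑(gF (σ x))) = N₀.det := by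
      rw [Matrix.det_apply]
      refine Finset.sum_congr rfl fun σ _ => ?_
      rw [Units.smul_def, zsmul_eq_mul]
      push_cast
      rfl
    rw [hdet2, hN₀P, hP]
    have : (Matrix.of fun i j : {v : V // v ≠ v0} => B i ↑(gF j))
        = (Matrix.of fun i j : {v : V // v ≠ v0} => inc s t ↑i ↑(gF j)) := rfl
    rw [this]
    ring
  -- Step 3: identify with the spanning tree sum
  rw [h1, h3, Finset.sum_filter]
  refine Finset.sum_congr rfl fun F _ => ?_
  by_cases hsp : IsSpanningTree s t F
  · have hFc : F.card = Fintype.card {v : V // v ≠ v0} := by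
      have := hsp.2
      omega
    have hgF : Fintype.card {v : V // v ≠ v0} = Fintype.card {e : E // e ∈ F} := by
      rw [Fintype.card_coe]
      omega
    obtain gF := Fintype.equivOfCardEq hgF
    rw [hinner F hFc gF, tree_det_sq s t v0 F hsp.1 hsp.2 gF, mul_one, if_pos hsp]
  · by_cases hFc : F.card = Fintype.card {v : V // v ≠ v0}
    · have hgF : Fintype.card {v : V // v ≠ v0} = Fintype.card {e : E // e ∈ F} := by
        rw [Fintype.card_coe]
        omega
      obtain gF := Fintype.equivOfCardEq hgF
      have hnc : ¬ ∀ u v : V, Relation.ReflTransGen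
          (fun a b => ∃ e ∈ F, (s e = a ∧ t e = b) ∨ (s e = b ∧ t e = a)) u v := by
        intro hcn
        exact hsp ⟨hcn, by omega⟩
      rw [hinner F hFc gF, nontree_det s t v0 F hnc gF, if_neg hsp]
      norm_num
    · rw [if_neg hsp]
      refine Finset.sum_eq_zero fun f hf => ?_
      have hf' : Finset.image f Finset.univ = F := (Finset.mem_filter.mp hf).2
      refine h2 f fun hinj => hFc ?_
      rw [← hf', Finset.card_image_of_injective _ hinj, Finset.card_univ]

/-- all entries of the adjugate of lap0 are the spanning tree sum -/
lemma adjugate_lap0 (s t : E → V) (w : E → ℚ) (hw : ∀ e, 0 < w e)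
    (hconn : GraphConnected s t) (u v : V) :
    (lap0 s t w).adjugate u v
      = ∑ F ∈ Finset.univ.filter (fun F : Finset E => IsSpanningTree s t F),
          ∏ e ∈ F, w e := by
  classical
  set A := lap0 s t w with hA
  have hones : A.mulVec (fun _ => (1 : ℚ)) = 0 := by
    funext u'
    simp [hA, lap0_mulVec_apply]
  have hdet : A.det = 0 := by
    rw [← Matrix.exists_mulVec_eq_zero_iff]
    refine ⟨fun _ => 1, fun h => ?_, hones⟩
    have := congrFun h u
    norm_num at this
  have hmul : A * A.adjugate = 0 := by
    rw [Matrix.mul_adjugate, hdet, zero_smul]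
  have hcol : ∀ j u1 u2, A.adjugate u1 j = A.adjugate u2 j := by
    intro j u1 u2
    refine lap0_ker s t w hw hconn (x := fun u' => A.adjugate u' j) ?_ u1 u2
    funext u'
    have h := congrFun (congrFun hmul u') j
    simpa [Matrix.mul_apply, Matrix.mulVec, dotProduct] using h
  have hdiag : A.adjugate u v = A.adjugate v v := hcol v u v
  rw [hdiag, Matrix.adjugate_apply, det_updateRow_single, det_submatrix_lap0]

end Stmt2Aux

/-- the adjugate of the weighted Laplacian equals `C_V⁻¹ · J · ξ`, where `J`
is the all-ones matrix and `ξ = (∏_v c(v)) · Σ_{spanning trees T} ∏_{e ∈ T} c(e)⁻¹`. -/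
theorem stmt2 {V E : Type*} [Fintype V] [Fintype E] [DecidableEq V] [DecidableEq E]
    (s t : E → V) (cV : V → ℕ) (cE : E → ℕ)
    (hcV : ∀ v, 0 < cV v) (hcE : ∀ e, 0 < cE e)
    (hds : ∀ e, cE e ∣ cV (s e)) (hdt : ∀ e, cE e ∣ cV (t e))
    (hconn : GraphConnected s t) :
    ((gogLap s t cV cE).map (Int.cast : ℤ → ℚ)).adjugate =
      ((∏ v : V, (cV v : ℚ)) *
        ∑ F ∈ Finset.univ.filter (fun F : Finset E => IsSpanningTree s t F),
          ∏ e ∈ F, ((cE e : ℚ))⁻¹) •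
      (Matrix.diagonal (fun v => ((cV v : ℚ))⁻¹) * Matrix.of (fun _ _ => (1 : ℚ))) := by
  classical
  set w : E → ℚ := fun e => ((cE e : ℚ))⁻¹ with hw
  have hwpos : ∀ e, 0 < w e := fun e => by
    simp [hw]
    exact_mod_cast hcE e
  -- factor the Laplacian
  have hfact : (gogLap s t cV cE).map (Int.cast : ℤ → ℚ)
      = Stmt2Aux.lap0 s t w * Matrix.diagonal (fun v => (cV v : ℚ)) := by
    ext u v
    simp only [Matrix.map_apply, gogLap, Matrix.of_apply, Matrix.mul_diagonal,
      Stmt2Aux.lap0]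
    rw [Int.cast_sum, Finset.sum_mul]
    refine Finset.sum_congr rfl fun e _ => ?_
    rw [Int.cast_mul, Int.cast_mul, Stmt2Aux.inc_cast, Stmt2Aux.inc_cast, Int.cast_natCast]
    by_cases hv : s e = v ∨ t e = v
    · have hdvd : cE e ∣ cV v := by
        rcases hv with h | h
        · exact h ▸ hds e
        · exact h ▸ hdt e
      have hne : (cE e : ℚ) ≠ 0 := by
        exact_mod_cast (hcE e).ne'
      have h2 : ((cV v / cE e : ℕ) : ℚ) = (cV v : ℚ) * w e := by
        rw [Nat.cast_div hdvd hne, hw, div_eq_mul_inv]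
      rw [h2]
      ring
    · push_neg at hv
      have h0 : Stmt2Aux.inc s t v e = 0 := by
        simp [Stmt2Aux.inc, hv.1, hv.2]
      rw [h0]
      ring
  rcases isEmpty_or_nonempty V with hV | hV
  · ext u v
    exact isEmptyElim u
  rw [hfact, Matrix.adjugate_mul_distrib, Matrix.adjugate_diagonal]
  ext u v
  rw [Matrix.diagonal_mul]
  rw [Stmt2Aux.adjugate_lap0 s t w hwpos hconn u v]
  have hcvu : (cV u : ℚ) ≠ 0 := by exact_mod_cast (hcV u).ne'
  have hprod := Finset.mul_prod_erase Finset.univ (fun v => (cV v : ℚ)) (Finset.mem_univ u)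
  simp only [Matrix.smul_apply, Matrix.mul_apply, Matrix.diagonal_apply, Matrix.of_apply,
    smul_eq_mul]
  rw [Finset.sum_eq_single u (fun b _ hb => by simp [Ne.symm hb]) (by simp)]
  simp only [if_pos rfl]
  rw [← hprod]
  rw [if_pos trivial]
  field_simp
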